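/- Let A ∈ ℝ^{m×m×n} be (1,2)-symmetric and nonnegative with structure A = [0 B; B' 0], where B ∈ ℝ^{m₁×m₂×n} and B' has 3-slices equal to transposes of those of B. Assume the best rank-(1,1,1) approximation of B is unique and given by nonnegative (u, v, w) with B·(u,v) = τ w. Set U = [0 u; v 0] ∈ ℝ^{m×2}. Then (U, U, w) is the best rank-(2,2,1) approximation of A, and the core tensor is F = [0 τ; τ 0] ∈ ℝ^{2×2×1}. -/

import Mathlib

open scoped BigOperators
open Sum

noncomputable section

/-- Multilinear (Tucker) tensor–matrix product: `(U,V,W)·A`. -/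
def tmul {ι₁ ι₂ ι₃ κ₁ κ₂ κ₃ : Type*} [Fintype ι₁] [Fintype ι₂] [Fintype ι₃]
    (U : κ₁ → ι₁ → ℝ) (V : κ₂ → ι₂ → ℝ) (W : κ₃ → ι₃ → ℝ)
    (A : ι₁ → ι₂ → ι₃ → ℝ) : κ₁ → κ₂ → κ₃ → ℝ :=
  fun i j k => ∑ a, ∑ b, ∑ c, U i a * V j b * W k c * A a b c

/-- Squared Frobenius norm of a 3-tensor. -/
def fro2 {ι₁ ι₂ ι₃ : Type*} [Fintype ι₁] [Fintype ι₂] [Fintype ι₃]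
    (A : ι₁ → ι₂ → ι₃ → ℝ) : ℝ := ∑ i, ∑ j, ∑ k, (A i j k) ^ 2

/-- Frobenius norm of a 3-tensor. -/
def fro {ι₁ ι₂ ι₃ : Type*} [Fintype ι₁] [Fintype ι₂] [Fintype ι₃]
    (A : ι₁ → ι₂ → ι₃ → ℝ) : ℝ := Real.sqrt (fro2 A)

/-- Trilinear form `A·(x,y,z)`. -/
def tri {ι₁ ι₂ ι₃ : Type*} [Fintype ι₁] [Fintype ι₂] [Fintype ι₃]
    (A : ι₁ → ι₂ → ι₃ → ℝ) (x : ι₁ → ℝ) (y : ι₂ → ℝ) (z : ι₃ → ℝ) : ℝ :=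
  ∑ i, ∑ j, ∑ k, A i j k * x i * y j * z k

/-- Unit vector (Euclidean norm 1). -/
def unitVec {ι : Type*} [Fintype ι] (x : ι → ℝ) : Prop := ∑ i, x i ^ 2 = 1

/-- A matrix (given as a family of rows) has orthonormal columns. -/
def orthCols {ι κ : Type*} [Fintype ι] [DecidableEq κ] (X : ι → κ → ℝ) : Prop :=
  ∀ a b, (∑ i, X i a * X i b) = if a = b then (1 : ℝ) else 0

/-! ### Auxiliary lemmas -/

lemma fro2_nonneg {ι₁ ι₂ ι₃ : Type*} [Fintype ι₁] [Fintype ι₂] [Fintype ι₃]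
    (A : ι₁ → ι₂ → ι₃ → ℝ) : 0 ≤ fro2 A :=
  Finset.sum_nonneg fun _ _ => Finset.sum_nonneg fun _ _ =>
    Finset.sum_nonneg fun _ _ => sq_nonneg _

lemma fro2_prod {ι₁ ι₂ ι₃ : Type*} [Fintype ι₁] [Fintype ι₂] [Fintype ι₃]
    (A : ι₁ → ι₂ → ι₃ → ℝ) :
    fro2 A = ∑ i : ι₁ × ι₂ × ι₃, (A i.1 i.2.1 i.2.2) ^ 2 := by
  rw [fro2, Fintype.sum_prod_type]
  exact Finset.sum_congr rfl fun i _ => by rw [Fintype.sum_prod_type]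

lemma tri_prod {ι₁ ι₂ ι₃ : Type*} [Fintype ι₁] [Fintype ι₂] [Fintype ι₃]
    (A : ι₁ → ι₂ → ι₃ → ℝ) (x : ι₁ → ℝ) (y : ι₂ → ℝ) (z : ι₃ → ℝ) :
    tri A x y z = ∑ i : ι₁ × ι₂ × ι₃, A i.1 i.2.1 i.2.2 * x i.1 * y i.2.1 * z i.2.2 := by
  rw [tri, Fintype.sum_prod_type]
  exact Finset.sum_congr rfl fun i _ => by rw [Fintype.sum_prod_type]

lemma tmul_prod {ι₁ ι₂ ι₃ κ₁ κ₂ κ₃ : Type*} [Fintype ι₁] [Fintype ι₂] [Fintype ι₃]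
    (U : κ₁ → ι₁ → ℝ) (V : κ₂ → ι₂ → ℝ) (W : κ₃ → ι₃ → ℝ)
    (H : ι₁ → ι₂ → ι₃ → ℝ) (p : κ₁) (q : κ₂) (k : κ₃) :
    tmul U V W H p q k
      = ∑ j : ι₁ × ι₂ × ι₃, U p j.1 * V q j.2.1 * W k j.2.2 * H j.1 j.2.1 j.2.2 := by
  rw [tmul, Fintype.sum_prod_type]
  exact Finset.sum_congr rfl fun i _ => by rw [Fintype.sum_prod_type]

lemma L1 {I J : Type*} [Fintype I] [Fintype J] (g : I → ℝ) (Y : I → J → ℝ) (H : J → ℝ) :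
    (∑ i, g i * (∑ j, Y i j * H j)) = ∑ j, (∑ i, g i * Y i j) * H j := by
  simp only [Finset.mul_sum, ← mul_assoc]
  rw [Finset.sum_comm]
  simp only [← Finset.sum_mul]

lemma L2 {I J : Type*} [Fintype I] [Fintype J] [DecidableEq J] (Y : I → J → ℝ)
    (hY : ∀ j j', (∑ i, Y i j * Y i j') = if j = j' then (1:ℝ) else 0) (H : J → ℝ) :
    (∑ i, (∑ j, Y i j * H j) ^ 2) = ∑ j, (H j) ^ 2 := by
  have e1 : ∀ i, (∑ j, Y i j * H j) ^ 2
      = ∑ j, ∑ j', (Y i j * Y i j') * (H j * H j') := by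
    intro i
    rw [sq, Finset.sum_mul_sum]
    exact Finset.sum_congr rfl fun j _ => Finset.sum_congr rfl fun j' _ => by ring
  rw [Finset.sum_congr rfl fun i _ => e1 i]
  rw [Finset.sum_comm]
  have e2 : ∀ j, (∑ i, ∑ j', (Y i j * Y i j') * (H j * H j'))
      = ∑ j', (∑ i, Y i j * Y i j') * (H j * H j') := by
    intro j
    rw [Finset.sum_comm]
    exact Finset.sum_congr rfl fun j' _ => by rw [← Finset.sum_mul]
  rw [Finset.sum_congr rfl fun j _ => e2 j]
  refine Finset.sum_congr rfl fun j _ => ?_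
  rw [Finset.sum_congr rfl fun j' _ => by rw [hY j j']]
  simp [ite_mul, Finset.sum_ite_eq, sq]

set_option maxHeartbeats 1000000 in
/-- Key identity: error of an orthogonal Tucker approximation. -/
lemma key {M N' : Type*} [Fintype M] [Fintype N']
    (A : M → M → N' → ℝ) (X : M → Fin 2 → ℝ) (Z : N' → Fin 1 → ℝ)
    (hX : orthCols X) (hZ : orthCols Z) (H : Fin 2 → Fin 2 → Fin 1 → ℝ) :
    fro2 (fun p q k => A p q k - tmul X X Z H p q k)
      = fro2 A
        - fro2 (fun a b c => tri A (fun p => X p a) (fun q => X q b) (fun k => Z k c))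
        + fro2 (fun a b c =>
            H a b c - tri A (fun p => X p a) (fun q => X q b) (fun k => Z k c)) := by
  classical
  set G : Fin 2 → Fin 2 → Fin 1 → ℝ :=
    fun a b c => tri A (fun p => X p a) (fun q => X q b) (fun k => Z k c) with hG
  show fro2 (fun p q k => A p q k - tmul X X Z H p q k)
      = fro2 A - fro2 G + fro2 (fun a b c => H a b c - G a b c)
  set Y : (M × M × N') → (Fin 2 × Fin 2 × Fin 1) → ℝ :=
    fun i j => X i.1 j.1 * X i.2.1 j.2.1 * Z i.2.2 j.2.2 with hYdef
  have hY : ∀ j j', (∑ i, Y i j * Y i j') = if j = j' then (1:ℝ) else 0 := by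
    intro j j'
    have h0 : (∑ i, Y i j * Y i j')
        = ∑ p, ∑ q, ∑ k, (X p j.1 * X p j'.1) * (X q j.2.1 * X q j'.2.1)
            * (Z k j.2.2 * Z k j'.2.2) := by
      rw [Fintype.sum_prod_type]
      refine Finset.sum_congr rfl fun p _ => ?_
      rw [Fintype.sum_prod_type]
      exact Finset.sum_congr rfl fun q _ => Finset.sum_congr rfl fun k _ => by
        simp only [hYdef]; try ring
    rw [h0]
    simp only [← Finset.sum_mul, ← Finset.mul_sum]
    rw [hX j.1 j'.1, hX j.2.1 j'.2.1, hZ j.2.2 j'.2.2]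
    by_cases h1 : j.1 = j'.1 <;> by_cases h2 : j.2.1 = j'.2.1 <;>
      by_cases h3 : j.2.2 = j'.2.2 <;>
      simp [h1, h2, h3, Prod.ext_iff]
  have hP : ∀ i : M × M × N', tmul X X Z H i.1 i.2.1 i.2.2
      = ∑ j : Fin 2 × Fin 2 × Fin 1, Y i j * H j.1 j.2.1 j.2.2 := by
    intro i
    rw [tmul_prod]
    all_goals exact Finset.sum_congr rfl fun j _ => by simp only [hYdef]; try ring
  have hGsum : ∀ j : Fin 2 × Fin 2 × Fin 1,
      (∑ i : M × M × N', A i.1 i.2.1 i.2.2 * Y i j) = G j.1 j.2.1 j.2.2 := by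
    intro j
    rw [show G j.1 j.2.1 j.2.2
      = tri A (fun p => X p j.1) (fun q => X q j.2.1) (fun k => Z k j.2.2) from rfl, tri_prod]
    all_goals exact Finset.sum_congr rfl fun i _ => by simp only [hYdef]; try ring
  have hL : fro2 (fun p q k => A p q k - tmul X X Z H p q k)
      = ∑ i : M × M × N', (A i.1 i.2.1 i.2.2 - ∑ j : Fin 2 × Fin 2 × Fin 1,
          Y i j * H j.1 j.2.1 j.2.2) ^ 2 := by
    rw [fro2_prod]
    exact Finset.sum_congr rfl fun i _ => by rw [← hP i]
  have hinner : (∑ i : M × M × N', A i.1 i.2.1 i.2.2 *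
        (∑ j : Fin 2 × Fin 2 × Fin 1, Y i j * H j.1 j.2.1 j.2.2))
      = ∑ j : Fin 2 × Fin 2 × Fin 1, G j.1 j.2.1 j.2.2 * H j.1 j.2.1 j.2.2 := by
    rw [L1 (fun i : M × M × N' => A i.1 i.2.1 i.2.2) Y
      (fun j : Fin 2 × Fin 2 × Fin 1 => H j.1 j.2.1 j.2.2)]
    exact Finset.sum_congr rfl fun j _ => by rw [hGsum j]
  have hsq : (∑ i : M × M × N',
        (∑ j : Fin 2 × Fin 2 × Fin 1, Y i j * H j.1 j.2.1 j.2.2) ^ 2)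
      = ∑ j : Fin 2 × Fin 2 × Fin 1, (H j.1 j.2.1 j.2.2) ^ 2 :=
    L2 Y hY _
  have e3 : ∀ i : M × M × N',
      (A i.1 i.2.1 i.2.2 - ∑ j : Fin 2 × Fin 2 × Fin 1, Y i j * H j.1 j.2.1 j.2.2) ^ 2
      = (A i.1 i.2.1 i.2.2) ^ 2
        - 2 * (A i.1 i.2.1 i.2.2 * (∑ j : Fin 2 × Fin 2 × Fin 1, Y i j * H j.1 j.2.1 j.2.2))
        + (∑ j : Fin 2 × Fin 2 × Fin 1, Y i j * H j.1 j.2.1 j.2.2) ^ 2 :=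
    fun i => by ring
  rw [hL, Finset.sum_congr rfl fun i _ => e3 i, Finset.sum_add_distrib,
    Finset.sum_sub_distrib, ← Finset.mul_sum, hinner, hsq]
  have e4 : fro2 (fun a b c => H a b c - G a b c)
      = (∑ j : Fin 2 × Fin 2 × Fin 1, (H j.1 j.2.1 j.2.2) ^ 2)
        - 2 * (∑ j : Fin 2 × Fin 2 × Fin 1, G j.1 j.2.1 j.2.2 * H j.1 j.2.1 j.2.2)
        + ∑ j : Fin 2 × Fin 2 × Fin 1, (G j.1 j.2.1 j.2.2) ^ 2 := by
    rw [fro2_prod]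
    have e5 : ∀ j : Fin 2 × Fin 2 × Fin 1,
        (H j.1 j.2.1 j.2.2 - G j.1 j.2.1 j.2.2) ^ 2
        = (H j.1 j.2.1 j.2.2) ^ 2 - 2 * (G j.1 j.2.1 j.2.2 * H j.1 j.2.1 j.2.2)
          + (G j.1 j.2.1 j.2.2) ^ 2 := fun j => by ring
    rw [Finset.sum_congr rfl fun j _ => e5 j, Finset.sum_add_distrib,
      Finset.sum_sub_distrib, ← Finset.mul_sum]
  rw [fro2_prod A, e4, fro2_prod G]
  ring


lemma sum3_congr {ι₁ ι₂ ι₃ : Type*} [Fintype ι₁] [Fintype ι₂] [Fintype ι₃]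
    (f g : ι₁ → ι₂ → ι₃ → ℝ) (h : ∀ i j k, f i j k = g i j k) :
    (∑ i, ∑ j, ∑ k, f i j k) = ∑ i, ∑ j, ∑ k, g i j k :=
  Finset.sum_congr rfl fun i _ => Finset.sum_congr rfl fun j _ =>
    Finset.sum_congr rfl fun k _ => h i j k

lemma tri_zero_left {ι₁ ι₂ ι₃ : Type*} [Fintype ι₁] [Fintype ι₂] [Fintype ι₃]
    (A : ι₁ → ι₂ → ι₃ → ℝ) (y : ι₂ → ℝ) (z : ι₃ → ℝ) :
    tri A (fun _ => (0:ℝ)) y z = 0 := by simp [tri]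

lemma tri_zero_mid {ι₁ ι₂ ι₃ : Type*} [Fintype ι₁] [Fintype ι₂] [Fintype ι₃]
    (A : ι₁ → ι₂ → ι₃ → ℝ) (x : ι₁ → ℝ) (z : ι₃ → ℝ) :
    tri A x (fun _ => (0:ℝ)) z = 0 := by simp [tri]

lemma quad_aux (g00 g11 g01 τ : ℝ) (hτ : 0 ≤ τ) (hle : g11 ≤ g00)
    (h : ∀ c d : ℝ, c^2 + d^2 = 1 → |c^2*g00 + 2*c*d*g01 + d^2*g11| ≤ τ) :
    g00^2 + g11^2 + 2*g01^2 ≤ 2*τ^2 := by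
  set p := g00 - g11 with hp
  set t := g00 + g11 with ht
  have hp0 : 0 ≤ p := by simp only [hp]; linarith
  set r := Real.sqrt (p^2 + 4*g01^2) with hr
  have hr0 : 0 ≤ r := Real.sqrt_nonneg _
  have hr2 : r^2 = p^2 + 4*g01^2 := Real.sq_sqrt (by positivity)
  have hpr : p ≤ r := by nlinarith
  clear_value p t r
  clear hr
  by_cases hrz : r = 0
  · have hg01 : g01 = 0 := by nlinarith
    have hpz : p = 0 := by nlinarith
    have h1 := h 1 0 (by norm_num)
    rw [abs_le] at h1
    simp only [one_pow, one_mul, mul_zero, zero_mul, mul_one, add_zero, zero_add] at h1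
    nlinarith [h1.1, h1.2]
  · have hrpos : 0 < r := lt_of_le_of_ne hr0 (Ne.symm hrz)
    set N := 2*r*(r+p) with hN
    have hNpos : 0 < N := by nlinarith
    set s := Real.sqrt N with hs
    have hs2 : s^2 = N := Real.sq_sqrt hNpos.le
    have hspos : 0 < s := Real.sqrt_pos.mpr hNpos
    have hsn : s ≠ 0 := hspos.ne'
    clear_value N s
    clear hs
    have hunit : ((r+p)/s)^2 + (2*g01/s)^2 = 1 := by
      rw [div_pow, div_pow, hs2, ← add_div, div_eq_one_iff_eq hNpos.ne']
      linear_combination -hr2 - hN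
    have hunit2 : (-(2*g01)/s)^2 + ((r+p)/s)^2 = 1 := by
      linear_combination hunit
    have h1 := h ((r+p)/s) (2*g01/s) hunit
    have h2 := h (-(2*g01)/s) ((r+p)/s) hunit2
    have e1 : ((r+p)/s)^2*g00 + 2*((r+p)/s)*(2*g01/s)*g01 + (2*g01/s)^2*g11 = (t+r)/2 := by
      rw [show ((r+p)/s)^2*g00 + 2*((r+p)/s)*(2*g01/s)*g01 + (2*g01/s)^2*g11
          = ((r+p)^2*g00 + (r+p)*(4*g01^2) + (4*g01^2)*g11)/s^2 by ring]
      rw [hs2, div_eq_iff hNpos.ne', hN]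
      subst hp ht
      linear_combination (-((g00-g11)+r+g11)) * hr2
    have e2 : (-(2*g01)/s)^2*g00 + 2*(-(2*g01)/s)*((r+p)/s)*g01 + ((r+p)/s)^2*g11 = (t-r)/2 := by
      rw [show (-(2*g01)/s)^2*g00 + 2*(-(2*g01)/s)*((r+p)/s)*g01 + ((r+p)/s)^2*g11
          = ((4*g01^2)*g00 - (r+p)*(4*g01^2) + (r+p)^2*g11)/s^2 by ring]
      rw [hs2, div_eq_iff hNpos.ne', hN]
      subst hp ht
      linear_combination (-(g00-(r+(g00-g11)))) * hr2
    rw [e1, abs_le] at h1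
    rw [e2, abs_le] at h2
    nlinarith [hr2, h1.1, h1.2, h2.1, h2.2]

lemma quad (g00 g11 g01 τ : ℝ) (hτ : 0 ≤ τ)
    (h : ∀ c d : ℝ, c^2 + d^2 = 1 → |c^2*g00 + 2*c*d*g01 + d^2*g11| ≤ τ) :
    g00^2 + g11^2 + 2*g01^2 ≤ 2*τ^2 := by
  rcases le_total g11 g00 with hle | hle
  · exact quad_aux g00 g11 g01 τ hτ hle h
  · have := quad_aux g11 g00 g01 τ hτ hle (fun c d hcd => by
      have := h d c (by linarith)
      convert this using 2
      ring)
    linarith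

set_option maxHeartbeats 2000000 in
/-- for the bipartite tensor `A = [0 B; B' 0]` with unique nonnegative best
rank-(1,1,1) approximation `(u,v,w)` of `B`, `B·(u,v) = τw`, the triple `(U,U,w)` with
`U = [0 u; v 0]` is the best rank-(2,2,1) approximation of `A` and the core is
`[0 τ; τ 0]`. -/
theorem stmt_11 {m₁ m₂ n : ℕ}
    (B : Fin m₁ → Fin m₂ → Fin n → ℝ) (hB : ∀ i j k, 0 ≤ B i j k)
    (A : (Fin m₁ ⊕ Fin m₂) → (Fin m₁ ⊕ Fin m₂) → Fin n → ℝ)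
    (hA : A = fun p q k => match p, q with
      | Sum.inl i, Sum.inr j => B i j k
      | Sum.inr i, Sum.inl j => B j i k
      | _, _ => 0)
    (u : Fin m₁ → ℝ) (v : Fin m₂ → ℝ) (w : Fin n → ℝ) (τ : ℝ)
    (hu : unitVec u) (hv : unitVec v) (hw : unitVec w)
    (hun : ∀ i, 0 ≤ u i) (hvn : ∀ j, 0 ≤ v j) (hwn : ∀ k, 0 ≤ w k)
    (hopt : ∀ x y z, unitVec x → unitVec y → unitVec z →
      |tri B x y z| ≤ tri B u v w)
    (htau : tri B u v w = τ)
    (hcontr : ∀ k, (∑ i, ∑ j, B i j k * u i * v j) = τ * w k)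
    (huniq : ∀ x y z, unitVec x → unitVec y → unitVec z → |tri B x y z| = τ →
      ∀ i j k, tri B x y z * (x i * y j * z k) = τ * (u i * v j * w k)) :
    ∃ (U : (Fin m₁ ⊕ Fin m₂) → Fin 2 → ℝ) (W : Fin n → Fin 1 → ℝ),
      (∀ i, U (inl i) 0 = 0) ∧ (∀ i, U (inl i) 1 = u i) ∧
      (∀ j, U (inr j) 0 = v j) ∧ (∀ j, U (inr j) 1 = 0) ∧
      (∀ k, W k 0 = w k) ∧ orthCols U ∧ orthCols W ∧
      (∀ a b c, tri A (fun p => U p a) (fun q => U q b) (fun k => W k c)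
        = if a = b then 0 else τ) ∧
      (∀ (X : (Fin m₁ ⊕ Fin m₂) → Fin 2 → ℝ) (Z : Fin n → Fin 1 → ℝ)
        (H : Fin 2 → Fin 2 → Fin 1 → ℝ), orthCols X → orthCols Z →
        fro2 (fun p q k => A p q k -
          tmul U U W (fun a b c =>
            tri A (fun p => U p a) (fun q => U q b) (fun k => W k c)) p q k)
        ≤ fro2 (fun p q k => A p q k - tmul X X Z H p q k)) := by
  classical
  have hτ0 : 0 ≤ τ := by
    rw [← htau, tri]
    refine Finset.sum_nonneg fun i _ => Finset.sum_nonneg fun j _ =>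
      Finset.sum_nonneg fun k _ => ?_
    exact mul_nonneg (mul_nonneg (mul_nonneg (hB i j k) (hun i)) (hvn j)) (hwn k)
  have hu' : (∑ i, u i * u i) = 1 := by simpa [unitVec, pow_two] using hu
  have hv' : (∑ j, v j * v j) = 1 := by simpa [unitVec, pow_two] using hv
  have hw' : (∑ k, w k * w k) = 1 := by simpa [unitVec, pow_two] using hw
  -- structure of A
  have hAsym : ∀ p q k, A p q k = A q p k := by
    intro p q k
    rw [hA]
    cases p <;> cases q <;> rfl
  have htriSym : ∀ (x y : Fin m₁ ⊕ Fin m₂ → ℝ) (z : Fin n → ℝ),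
      tri A x y z = tri A y x z := by
    intro x y z
    rw [tri, tri]
    conv_lhs => rw [Finset.sum_comm]
    refine Finset.sum_congr rfl fun b _ => Finset.sum_congr rfl fun a _ =>
      Finset.sum_congr rfl fun k _ => ?_
    rw [hAsym a b k]; ring
  have htriA : ∀ (x y : Fin m₁ ⊕ Fin m₂ → ℝ) (z : Fin n → ℝ),
      tri A x y z = tri B (fun i => x (inl i)) (fun j => y (inr j)) z
        + tri B (fun i => y (inl i)) (fun j => x (inr j)) z := by
    intro x y z
    simp only [tri, hA, Fintype.sum_sum_type]
    simp only [zero_mul, Finset.sum_const_zero, add_zero, zero_add]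
    congr 1
    rw [Finset.sum_comm]
    exact Finset.sum_congr rfl fun j _ => Finset.sum_congr rfl fun i _ =>
      Finset.sum_congr rfl fun k _ => by ring
  -- bound on B against unit vectors
  have hBbound : ∀ (x : Fin m₁ → ℝ) (y : Fin m₂ → ℝ) (z : Fin n → ℝ), unitVec z →
      |tri B x y z| ≤ τ * Real.sqrt (∑ i, x i ^ 2) * Real.sqrt (∑ j, y j ^ 2) := by
    intro x y z hz
    rcases eq_or_ne (∑ i, x i ^ 2) 0 with hx0 | hx0
    · have hxz : ∀ i, x i = 0 := by
        intro i
        have := (Finset.sum_eq_zero_iff_of_nonneg (fun i _ => sq_nonneg (x i))).mp hx0 i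
          (Finset.mem_univ i)
        exact pow_eq_zero_iff (two_ne_zero) |>.mp this
      have h0 : tri B x y z = 0 := by
        rw [tri]
        refine Finset.sum_eq_zero fun i _ => Finset.sum_eq_zero fun j _ =>
          Finset.sum_eq_zero fun k _ => ?_
        rw [hxz i]; ring
      rw [h0, hx0]
      simp
    rcases eq_or_ne (∑ j, y j ^ 2) 0 with hy0 | hy0
    · have hyz : ∀ j, y j = 0 := by
        intro j
        have := (Finset.sum_eq_zero_iff_of_nonneg (fun j _ => sq_nonneg (y j))).mp hy0 j
          (Finset.mem_univ j)
        exact pow_eq_zero_iff (two_ne_zero) |>.mp this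
      have h0 : tri B x y z = 0 := by
        rw [tri]
        refine Finset.sum_eq_zero fun i _ => Finset.sum_eq_zero fun j _ =>
          Finset.sum_eq_zero fun k _ => ?_
        rw [hyz j]; ring
      rw [h0, hy0]
      simp
    · have hxpos : 0 < ∑ i, x i ^ 2 :=
        lt_of_le_of_ne (Finset.sum_nonneg fun i _ => sq_nonneg _) (Ne.symm hx0)
      have hypos : 0 < ∑ j, y j ^ 2 :=
        lt_of_le_of_ne (Finset.sum_nonneg fun j _ => sq_nonneg _) (Ne.symm hy0)
      set a := Real.sqrt (∑ i, x i ^ 2) with hadef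
      set b := Real.sqrt (∑ j, y j ^ 2) with hbdef
      have ha : 0 < a := Real.sqrt_pos.mpr hxpos
      have hb : 0 < b := Real.sqrt_pos.mpr hypos
      have ha2 : a ^ 2 = ∑ i, x i ^ 2 := Real.sq_sqrt hxpos.le
      have hb2 : b ^ 2 = ∑ j, y j ^ 2 := Real.sq_sqrt hypos.le
      have hux : unitVec (fun i => x i / a) := by
        rw [unitVec]
        simp only [div_pow, ← Finset.sum_div, ha2]
        exact div_self (by positivity)
      have huy : unitVec (fun j => y j / b) := by
        rw [unitVec]
        simp only [div_pow, ← Finset.sum_div, hb2]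
        exact div_self (by positivity)
      have hscale : tri B (fun i => x i / a) (fun j => y j / b) z
          = tri B x y z / (a * b) := by
        rw [eq_div_iff (by positivity)]
        simp only [tri, Finset.sum_mul]
        exact sum3_congr _ _ fun i j k => by field_simp; try ring
      have h1 := hopt _ _ _ hux huy hz
      rw [hscale, htau, abs_div, abs_of_pos (by positivity : (0:ℝ) < a * b)] at h1
      rw [mul_assoc]
      exact (div_le_iff₀ (by positivity)).mp h1
  -- quadratic form bound on A
  have hquad : ∀ (x : Fin m₁ ⊕ Fin m₂ → ℝ) (z : Fin n → ℝ), unitVec x → unitVec z →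
      |tri A x x z| ≤ τ := by
    intro x z hx hz
    rw [htriA x x z]
    have h1 := hBbound (fun i => x (inl i)) (fun j => x (inr j)) z hz
    set a := Real.sqrt (∑ i, x (inl i) ^ 2) with hadef
    set b := Real.sqrt (∑ j, x (inr j) ^ 2) with hbdef
    have ha0 : 0 ≤ a := Real.sqrt_nonneg _
    have hb0 : 0 ≤ b := Real.sqrt_nonneg _
    have ha2 : a ^ 2 = ∑ i, x (inl i) ^ 2 :=
      Real.sq_sqrt (Finset.sum_nonneg fun i _ => sq_nonneg _)
    have hb2 : b ^ 2 = ∑ j, x (inr j) ^ 2 :=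
      Real.sq_sqrt (Finset.sum_nonneg fun j _ => sq_nonneg _)
    have hab : a ^ 2 + b ^ 2 = 1 := by
      rw [ha2, hb2]
      rw [unitVec, Fintype.sum_sum_type] at hx
      exact hx
    calc |tri B (fun i => x (inl i)) (fun j => x (inr j)) z
          + tri B (fun i => x (inl i)) (fun j => x (inr j)) z|
        ≤ |tri B (fun i => x (inl i)) (fun j => x (inr j)) z|
          + |tri B (fun i => x (inl i)) (fun j => x (inr j)) z| := abs_add_le _ _
      _ ≤ τ := by nlinarith [sq_nonneg (a - b)]
  -- bilinearity
  have hbil : ∀ (c d : ℝ) (x0 x1 : Fin m₁ ⊕ Fin m₂ → ℝ) (z : Fin n → ℝ),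
      tri A (fun p => c * x0 p + d * x1 p) (fun p => c * x0 p + d * x1 p) z
      = c^2 * tri A x0 x0 z + c*d * tri A x0 x1 z + d*c * tri A x1 x0 z
        + d^2 * tri A x1 x1 z := by
    intro c d x0 x1 z
    simp only [tri]
    rw [sum3_congr _ (fun p q k =>
      c^2 * (A p q k * x0 p * x0 q * z k) + c*d*(A p q k * x0 p * x1 q * z k)
      + d*c*(A p q k * x1 p * x0 q * z k) + d^2*(A p q k * x1 p * x1 q * z k))
      (fun p q k => by ring)]
    simp only [Finset.sum_add_distrib, ← Finset.mul_sum]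
  -- the factor matrices
  set U : (Fin m₁ ⊕ Fin m₂) → Fin 2 → ℝ := fun p a =>
    match p with
    | inl i => if a = 1 then u i else 0
    | inr j => if a = 0 then v j else 0 with hUdef
  set W : Fin n → Fin 1 → ℝ := fun k _ => w k with hWdef
  have hU1 : ∀ i, U (inl i) 0 = 0 := fun i => by simp [hUdef]
  have hU2 : ∀ i, U (inl i) 1 = u i := fun i => by simp [hUdef]
  have hU3 : ∀ j, U (inr j) 0 = v j := fun j => by simp [hUdef]
  have hU4 : ∀ j, U (inr j) 1 = 0 := fun j => by simp [hUdef]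
  have hW1 : ∀ k, W k 0 = w k := fun k => rfl
  have hUo : orthCols U := by
    intro a b
    fin_cases a <;> fin_cases b <;>
      simp [hUdef, Fintype.sum_sum_type, hu', hv']
  have hWo : orthCols W := by
    intro a b
    rw [if_pos (Subsingleton.elim a b)]
    exact hw'
  have hcore : ∀ (a b : Fin 2) (c : Fin 1),
      tri A (fun p => U p a) (fun q => U q b) (fun k => W k c)
      = if a = b then 0 else τ := by
    intro a b c
    rw [htriA]
    fin_cases a <;> fin_cases b <;>
      simp [hUdef, hWdef, tri_zero_left, tri_zero_mid, htau]
  refine ⟨U, W, hU1, hU2, hU3, hU4, hW1, hUo, hWo, hcore, ?_⟩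
  intro X Z H hXo hZo
  have hk1 := key A U W hUo hWo
    (fun a b c => tri A (fun p => U p a) (fun q => U q b) (fun k => W k c))
  have hz0 : fro2 (fun a b c =>
      (fun a b c => tri A (fun p => U p a) (fun q => U q b) (fun k => W k c)) a b c
      - tri A (fun p => U p a) (fun q => U q b) (fun k => W k c)) = 0 := by
    simp [fro2]
  have hGU : fro2 (fun a b c =>
      tri A (fun p => U p a) (fun q => U q b) (fun k => W k c)) = 2 * τ ^ 2 := by
    have e : (fun a b c => tri A (fun p => U p a) (fun q => U q b) (fun k => W k c))
        = fun (a b : Fin 2) (_ : Fin 1) => if a = b then (0:ℝ) else τ := by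
      funext a b c
      exact hcore a b c
    rw [e]
    simp [fro2, Fin.sum_univ_two, Fin.sum_univ_one]
    ring
  have hk2 := key A X Z hXo hZo H
  -- bound the Gram tensor of X, Z
  have hzZ : unitVec (fun k => Z k 0) := by
    have := hZo 0 0
    rw [if_pos rfl] at this
    simpa [unitVec, pow_two] using this
  set g : Fin 2 → Fin 2 → ℝ :=
    fun a b => tri A (fun p => X p a) (fun q => X q b) (fun k => Z k 0) with hgdef
  have hsymg : g 1 0 = g 0 1 := htriSym _ _ _
  have hquadhyp : ∀ c d : ℝ, c^2 + d^2 = 1 →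
      |c^2 * g 0 0 + 2*c*d * g 0 1 + d^2 * g 1 1| ≤ τ := by
    intro c d hcd
    have hyunit : unitVec (fun p => c * X p 0 + d * X p 1) := by
      rw [unitVec]
      have e : ∀ p : Fin m₁ ⊕ Fin m₂, (c * X p 0 + d * X p 1)^2
          = c^2 * (X p 0 * X p 0) + 2*c*d*(X p 0 * X p 1) + d^2*(X p 1 * X p 1) :=
        fun p => by ring
      rw [Finset.sum_congr rfl fun p _ => e p]
      simp only [Finset.sum_add_distrib, ← Finset.mul_sum]
      rw [hXo 0 0, hXo 0 1, hXo 1 1]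
      norm_num
      linear_combination hcd
    have hb := hquad (fun p => c * X p 0 + d * X p 1) (fun k => Z k 0) hyunit hzZ
    rw [hbil c d (fun p => X p 0) (fun p => X p 1) (fun k => Z k 0)] at hb
    have e2 : c^2 * g 0 0 + 2*c*d * g 0 1 + d^2 * g 1 1
        = c^2 * tri A (fun p => X p 0) (fun p => X p 0) (fun k => Z k 0)
          + c*d * tri A (fun p => X p 0) (fun p => X p 1) (fun k => Z k 0)
          + d*c * tri A (fun p => X p 1) (fun p => X p 0) (fun k => Z k 0)
          + d^2 * tri A (fun p => X p 1) (fun p => X p 1) (fun k => Z k 0) := by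
      rw [hgdef]
      simp only []
      rw [show tri A (fun p => X p 1) (fun p => X p 0) (fun k => Z k 0)
        = tri A (fun p => X p 0) (fun p => X p 1) (fun k => Z k 0) from htriSym _ _ _]
      ring
    rw [e2]
    exact hb
  have hquadres := quad (g 0 0) (g 1 1) (g 0 1) τ hτ0 hquadhyp
  have hGX : fro2 (fun a b c =>
      tri A (fun p => X p a) (fun q => X q b) (fun k => Z k c)) ≤ 2 * τ ^ 2 := by
    have e : fro2 (fun a b c =>
        tri A (fun p => X p a) (fun q => X q b) (fun k => Z k c))
        = g 0 0 ^ 2 + g 0 1 ^ 2 + (g 1 0 ^ 2 + g 1 1 ^ 2) := by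
      simp [fro2, Fin.sum_univ_two, Fin.sum_univ_one, hgdef]
    rw [e, hsymg]
    nlinarith [hquadres]
  have hpos := fro2_nonneg (fun a b c =>
    H a b c - tri A (fun p => X p a) (fun q => X q b) (fun k => Z k c))
  rw [hk1, hk2]
  rw [hz0, hGU]
  linarith
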